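/- The multinomial theorem for rising factorials: for positive reals a_1, ..., a_r and a natural number n, ∑ over tuples (n_1,...,n_r) of nonnegative integers with n_1+···+n_r = n of the multinomial coefficient n!/(n_1!···n_r!) times ∏_{j=1}^r (a_j)_{n_j} equals (a_1+···+a_r)_n. -/

import Mathlib

open Finset Polynomial

lemma desc_smeval_neg_eq (k : ℕ) (x : ℝ) :
    (descPochhammer ℤ k).smeval (-x) = (-1) ^ k * (ascPochhammer ℝ k).eval x := by
  have h := Polynomial.ascPochhammer_smeval_neg_eq_descPochhammer (-x) k
  rw [neg_neg] at h
  rw [Polynomial.ascPochhammer_smeval_eq_eval] at h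
  have h2 := congrArg (fun t => (-1 : ℝ) ^ k * t) h
  rw [Int.negOnePow_def, zpow_natCast, Units.smul_def, Units.val_pow_eq_pow_val, Units.val_neg,
    Units.val_one, zsmul_eq_mul, Int.cast_pow, Int.cast_neg, Int.cast_one] at h2
  simp only [← mul_assoc, ← pow_add, ← two_mul] at h2
  rw [pow_mul, neg_one_sq, one_pow, one_mul] at h2
  exact h2.symm

lemma asc_eval_add (n : ℕ) (x y : ℝ) :
    (ascPochhammer ℝ n).eval (x + y) =
      ∑ p ∈ Finset.HasAntidiagonal.antidiagonal n,
        (n.choose p.1 : ℝ) *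
          ((ascPochhammer ℝ p.1).eval x * (ascPochhammer ℝ p.2).eval y) := by
  have key := Ring.descPochhammer_smeval_add (R := ℝ) (r := -x) (s := -y) n (Commute.all _ _)
  rw [show -x + -y = -(x + y) by ring] at key
  rw [desc_smeval_neg_eq] at key
  have : ∀ p ∈ Finset.HasAntidiagonal.antidiagonal n,
      (n.choose p.1 : ℝ) *
        ((descPochhammer ℤ p.1).smeval (-x) * (descPochhammer ℤ p.2).smeval (-y)) =
      (-1) ^ n * ((n.choose p.1 : ℝ) *
        ((ascPochhammer ℝ p.1).eval x * (ascPochhammer ℝ p.2).eval y)) := by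
    intro p hp
    rw [desc_smeval_neg_eq, desc_smeval_neg_eq]
    have hn : p.1 + p.2 = n := Finset.HasAntidiagonal.mem_antidiagonal.mp hp
    rw [← hn, pow_add]
    ring
  rw [Finset.sum_congr rfl this, ← Finset.mul_sum] at key
  have hne : ((-1 : ℝ) ^ n) ≠ 0 := by positivity
  exact mul_left_cancel₀ hne key

lemma multinomial_rising_aux {ι : Type*} [DecidableEq ι] (s : Finset ι) (n : ℕ) (a : ι → ℝ) :
    ∑ f ∈ s.piAntidiag n,
        ((Nat.factorial n : ℝ) / ∏ j ∈ s, (Nat.factorial (f j) : ℝ)) *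
          ∏ j ∈ s, (ascPochhammer ℝ (f j)).eval (a j) =
      (ascPochhammer ℝ n).eval (∑ j ∈ s, a j) := by
  induction s using Finset.cons_induction generalizing n with
  | empty =>
    rcases Nat.eq_zero_or_pos n with hn | hn
    · subst hn; simp
    · rw [Finset.piAntidiag_empty_of_ne_zero hn.ne', Finset.sum_empty, Finset.sum_empty,
        ascPochhammer_eval_zero, if_neg hn.ne']
  | cons i s hi ih =>
    rw [Finset.piAntidiag_cons hi, Finset.sum_disjiUnion, Finset.sum_cons,
      asc_eval_add]
    refine Finset.sum_congr rfl fun p hp => ?_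
    have hn : p.1 + p.2 = n := Finset.HasAntidiagonal.mem_antidiagonal.mp hp
    rw [Finset.sum_map]
    have hterm : ∀ g ∈ s.piAntidiag p.2,
        ((Nat.factorial n : ℝ) /
            ∏ j ∈ Finset.cons i s hi,
              (Nat.factorial ((addRightEmbedding fun t => if t = i then p.1 else 0) g j) : ℝ)) *
          ∏ j ∈ Finset.cons i s hi,
            (ascPochhammer ℝ ((addRightEmbedding fun t => if t = i then p.1 else 0) g j)).eval (a j) =
        ((n.choose p.1 : ℝ) * (ascPochhammer ℝ p.1).eval (a i)) *
          (((Nat.factorial p.2 : ℝ) / ∏ j ∈ s, (Nat.factorial (g j) : ℝ)) *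
            ∏ j ∈ s, (ascPochhammer ℝ (g j)).eval (a j)) := by
      intro g hg
      have hgmem := Finset.mem_piAntidiag.mp hg
      have hgi : g i = 0 := by
        by_contra h
        exact hi (hgmem.2 i h)
      have happ : ∀ j, (addRightEmbedding fun t => if t = i then p.1 else 0) g j =
          g j + if j = i then p.1 else 0 := fun j => rfl
      have happ_i : (addRightEmbedding fun t => if t = i then p.1 else 0) g i = p.1 := by
        rw [happ, hgi, if_pos rfl, zero_add]
      have happ_s : ∀ j ∈ s, (addRightEmbedding fun t => if t = i then p.1 else 0) g j = g j := by
        intro j hj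
        rw [happ, if_neg (by rintro rfl; exact hi hj), add_zero]
      have hprod1 : ∏ j ∈ s, (Nat.factorial ((addRightEmbedding fun t => if t = i then p.1 else 0) g j) : ℝ)
          = ∏ j ∈ s, (Nat.factorial (g j) : ℝ) :=
        Finset.prod_congr rfl (fun j hj => by rw [happ_s j hj])
      have hprod2 : ∏ j ∈ s, (ascPochhammer ℝ ((addRightEmbedding fun t => if t = i then p.1 else 0) g j)).eval (a j)
          = ∏ j ∈ s, (ascPochhammer ℝ (g j)).eval (a j) :=
        Finset.prod_congr rfl (fun j hj => by rw [happ_s j hj])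
      rw [Finset.prod_cons, Finset.prod_cons, happ_i, hprod1, hprod2]
      have hfact : (Nat.factorial n : ℝ) =
          (n.choose p.1 : ℝ) * (Nat.factorial p.1 : ℝ) * (Nat.factorial p.2 : ℝ) := by
        rw [← Nat.cast_mul, ← Nat.cast_mul, ← hn]
        norm_cast
        rw [← Nat.add_choose_mul_factorial_mul_factorial p.1 p.2, Nat.choose_symm_add]
      rw [hfact]
      have h1 : (Nat.factorial p.1 : ℝ) ≠ 0 := Nat.cast_ne_zero.mpr (Nat.factorial_ne_zero _)
      have h2 : ∀ j ∈ s, (Nat.factorial (g j) : ℝ) ≠ 0 :=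
        fun j _ => Nat.cast_ne_zero.mpr (Nat.factorial_ne_zero _)
      field_simp
    rw [Finset.sum_congr rfl hterm, ← Finset.mul_sum, ih]
    ring

theorem multinomial_rising (r n : ℕ) (a : Fin r → ℝ) (ha : ∀ j, 0 < a j) :
    ∑ f ∈ Finset.Nat.antidiagonalTuple r n,
        ((Nat.factorial n : ℝ) / ∏ j, (Nat.factorial (f j) : ℝ)) *
          ∏ j, (ascPochhammer ℝ (f j)).eval (a j) =
      (ascPochhammer ℝ n).eval (∑ j, a j) := by
  rw [← Finset.piAntidiag_univ_fin_eq_antidiagonalTuple n r]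
  exact multinomial_rising_aux Finset.univ n a
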